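/- For all integers d ≥ 1 and n ≥ 1, p_{d+1}(n) ≤ Σ_c Π_i p_d(c_i), where the sum runs over all compositions c = (c_1, ..., c_k) of n into positive integer parts (k ranging over 1 ≤ k ≤ n) and the product runs over the parts of c. -/

import Mathlib

open Finset

set_option linter.unusedSectionVars false

lemma coord_lt {e : ℕ} {Q : Finset (Fin e → ℕ)} (hQ : IsLowerSet (↑Q : Set (Fin e → ℕ)))
    {x : Fin e → ℕ} (hx : x ∈ Q) (i : Fin e) : x i < Q.card := by
  have hinj : Function.Injective (fun j : ℕ => Function.update x i j) := by
    intro a b hab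
    have := congrFun hab i
    simpa using this
  have hsub : (Finset.range (x i + 1)).image (fun j => Function.update x i j) ⊆ Q := by
    intro y hy
    simp only [Finset.mem_image, Finset.mem_range] at hy
    obtain ⟨j, hj, rfl⟩ := hy
    refine hQ ?_ hx
    intro i'
    rcases eq_or_ne i' i with rfl | h
    · simp only [Function.update_self]; omega
    · simp [Function.update_of_ne h]
  have := Finset.card_le_card hsub
  rwa [Finset.card_image_of_injective _ hinj, Finset.card_range, Nat.add_one_le_iff] at this

lemma lowerFinite (e m : ℕ) :
    Finite {Q : Finset (Fin e → ℕ) // IsLowerSet (↑Q : Set (Fin e → ℕ)) ∧ Q.card = m} := by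
  classical
  set box : Finset (Fin e → ℕ) := Fintype.piFinset fun _ => Finset.range m with hbox
  have : ∀ Q : {Q : Finset (Fin e → ℕ) // IsLowerSet (↑Q : Set (Fin e → ℕ)) ∧ Q.card = m},
      Q.1 ∈ box.powerset := by
    rintro ⟨Q, hQ, hc⟩
    rw [Finset.mem_powerset]
    intro x hx
    rw [hbox, Fintype.mem_piFinset]
    intro i
    rw [Finset.mem_range, ← hc]
    exact coord_lt hQ hx i
  refine Finite.of_injective (fun Q => (⟨Q.1, this Q⟩ : {S // S ∈ box.powerset})) ?_
  intro a b hab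
  simp only [Subtype.mk.injEq] at hab
  exact Subtype.ext hab


variable {d : ℕ}

def lslice (Q : Finset (Fin (d+1) → ℕ)) (j : ℕ) : Finset (Fin d → ℕ) :=
  (Q.filter fun x => x (Fin.last d) = j).image Fin.init

lemma mem_lslice {Q : Finset (Fin (d+1) → ℕ)} {j : ℕ} {y : Fin d → ℕ} :
    y ∈ lslice Q j ↔ Fin.snoc y j ∈ Q := by
  constructor
  · intro h
    simp only [lslice, mem_image, mem_filter] at h
    obtain ⟨x, ⟨hxQ, hxl⟩, rfl⟩ := h
    rw [← hxl, Fin.snoc_init_self]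
    exact hxQ
  · intro h
    simp only [lslice, mem_image, mem_filter]
    exact ⟨Fin.snoc y j, ⟨h, Fin.snoc_last _ _⟩, Fin.init_snoc _ _⟩

lemma snoc_le_snoc {y z : Fin d → ℕ} {j j' : ℕ} (h : y ≤ z) (hj : j ≤ j') :
    (Fin.snoc y j : Fin (d+1) → ℕ) ≤ Fin.snoc z j' := by
  intro i
  induction i using Fin.lastCases with
  | last => simpa using hj
  | cast i => simpa using h i

lemma slice_lower {Q : Finset (Fin (d+1) → ℕ)} (hQ : IsLowerSet (↑Q : Set (Fin (d+1) → ℕ)))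
    (j : ℕ) : IsLowerSet (↑(lslice Q j) : Set (Fin d → ℕ)) := by
  intro z y hle hz
  simp only [Finset.mem_coe, mem_lslice] at *
  exact hQ (snoc_le_snoc hle le_rfl) hz

lemma slice_anti {Q : Finset (Fin (d+1) → ℕ)} (hQ : IsLowerSet (↑Q : Set (Fin (d+1) → ℕ)))
    {j j' : ℕ} (h : j ≤ j') : lslice Q j' ⊆ lslice Q j := by
  intro y hy
  rw [mem_lslice] at *
  exact hQ (snoc_le_snoc le_rfl h) hy

lemma sum_slice_card {Q : Finset (Fin (d+1) → ℕ)} (hQ : IsLowerSet (↑Q : Set (Fin (d+1) → ℕ)))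
    {n : ℕ} (hc : Q.card = n) :
    ∑ j ∈ Finset.range n, (lslice Q j).card = n := by
  classical
  have h1 : ∀ j, (lslice Q j).card = (Q.filter fun x => x (Fin.last d) = j).card := by
    intro j
    apply Finset.card_image_of_injOn
    intro a ha b hb hab
    simp only [Finset.coe_filter, Set.mem_setOf_eq] at ha hb
    funext i
    induction i using Fin.lastCases with
    | last => rw [ha.2, hb.2]
    | cast i => exact congrFun hab i
  rw [Finset.sum_congr rfl (fun j _ => h1 j)]
  have key := Finset.card_eq_sum_card_fiberwise (f := fun x : Fin (d+1) → ℕ => x (Fin.last d))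
    (s := Q) (t := Finset.range n) (fun x hx => by
      rw [Finset.mem_coe, Finset.mem_range, ← hc]; exact coord_lt hQ hx _)
  rw [← key]
  exact hc



variable {d : ℕ}

lemma list_sum_range (f : ℕ → ℕ) (k : ℕ) :
    ((List.range k).map f).sum = ∑ j ∈ Finset.range k, f j := by
  induction k with
  | zero => simp
  | succ k ih => rw [List.range_succ, List.map_append, List.sum_append, Finset.sum_range_succ, ih]; simp

/-- the number of nonempty slices -/
noncomputable def kOf (Q : Finset (Fin (d+1) → ℕ)) : ℕ := sInf {j | lslice Q j = ∅}

section Props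
variable {Q : Finset (Fin (d+1) → ℕ)} {n : ℕ}
  (hQ : IsLowerSet (↑Q : Set (Fin (d+1) → ℕ))) (hc : Q.card = n)

include hQ hc

lemma lslice_card_eq_empty : lslice Q n = ∅ := by
  rw [Finset.eq_empty_iff_forall_notMem]
  intro y hy
  rw [mem_lslice] at hy
  have := coord_lt hQ hy (Fin.last d)
  rw [hc] at this
  simp at this

lemma kOf_le : kOf Q ≤ n := Nat.sInf_le (lslice_card_eq_empty hQ hc)

lemma lslice_nonempty_of_lt {j : ℕ} (hj : j < kOf Q) : (lslice Q j).Nonempty := by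
  rw [Finset.nonempty_iff_ne_empty]
  exact Nat.notMem_of_lt_sInf hj

lemma lslice_empty_of_le {j : ℕ} (hj : kOf Q ≤ j) : lslice Q j = ∅ := by
  have hne : {j | lslice Q j = ∅}.Nonempty := ⟨n, lslice_card_eq_empty hQ hc⟩
  have h0 : lslice Q (kOf Q) = ∅ := Nat.sInf_mem hne
  exact Finset.subset_empty.mp (h0 ▸ slice_anti hQ hj)

/-- the composition of `n` given by the slice sizes -/
noncomputable def compOf : Composition n where
  blocks := (List.range (kOf Q)).map fun j => (lslice Q j).card
  blocks_pos := by
    intro i hi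
    simp only [List.mem_map, List.mem_range] at hi
    obtain ⟨j, hj, rfl⟩ := hi
    exact Finset.card_pos.mpr (lslice_nonempty_of_lt hQ hc hj)
  blocks_sum := by
    rw [list_sum_range]
    rw [Finset.sum_subset (Finset.range_subset_range.mpr (kOf_le hQ hc))
      (fun j _ hj => by
        rw [Finset.mem_range, not_lt] at hj
        rw [lslice_empty_of_le hQ hc hj, Finset.card_empty])]
    exact sum_slice_card hQ hc

@[simp] lemma compOf_length : (compOf hQ hc).length = kOf Q := by
  simp [compOf, Composition.length]

lemma compOf_blocksFun (i : Fin (compOf hQ hc).length) :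
    (compOf hQ hc).blocksFun i = (lslice Q (i : ℕ)).card := by
  simp [Composition.blocksFun, compOf, List.get_eq_getElem]
  exact List.get_eq_getElem.trans (by simp)

end Props

/-- `lowerCount d n` is the number of lower sets `Q ⊆ ℕ^d` with exactly `n` elements. -/
noncomputable def lowerCount (d n : ℕ) : ℕ :=
  Nat.card {Q : Finset (Fin d → ℕ) // IsLowerSet (↑Q : Set (Fin d → ℕ)) ∧ Q.card = n}

theorem stmt_4 (d n : ℕ) (hd : 1 ≤ d) (hn : 1 ≤ n) :
    lowerCount (d + 1) n ≤
      ∑ c : Composition n, (c.blocks.map (fun i => lowerCount d i)).prod := by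
  classical
  let T : ℕ → Type := fun m =>
    {R : Finset (Fin d → ℕ) // IsLowerSet (↑R : Set (Fin d → ℕ)) ∧ R.card = m}
  haveI hTf : ∀ m, Finite (T m) := fun m => lowerFinite d m
  haveI : ∀ m, Fintype (T m) := fun m => Fintype.ofFinite _
  let S : Type := Σ c : Composition n, ∀ i : Fin c.length, T (c.blocksFun i)
  haveI : Finite S := by
    show Finite (Σ c : Composition n, ∀ i : Fin c.length, T (c.blocksFun i))
    infer_instance
  let F : {Q : Finset (Fin (d+1) → ℕ) // IsLowerSet (↑Q : Set (Fin (d+1) → ℕ)) ∧ Q.card = n} → S :=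
    fun Q => ⟨compOf Q.2.1 Q.2.2,
      fun i => ⟨lslice Q.1 (i : ℕ), slice_lower Q.2.1 _, (compOf_blocksFun Q.2.1 Q.2.2 i).symm⟩⟩
  let G : S → Finset (Fin (d+1) → ℕ) :=
    fun p => Finset.univ.biUnion fun i : Fin p.1.length => (p.2 i).1.image fun y => Fin.snoc y (i : ℕ)
  have hGF : ∀ Q, G (F Q) = Q.1 := by
    rintro ⟨Q, hQ, hc⟩
    ext x
    simp only [G, F, Finset.mem_biUnion, Finset.mem_univ, true_and, Finset.mem_image]
    constructor
    · rintro ⟨i, y, hy, rfl⟩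
      exact mem_lslice.mp hy
    · intro hx
      have hj : x (Fin.last d) < kOf Q := by
        by_contra h
        rw [not_lt] at h
        have hemp := lslice_empty_of_le hQ hc h
        have hmem : Fin.init x ∈ lslice Q (x (Fin.last d)) :=
          mem_lslice.mpr (by rw [Fin.snoc_init_self]; exact hx)
        rw [hemp] at hmem
        exact absurd hmem (Finset.notMem_empty _)
      refine ⟨⟨x (Fin.last d), by rw [compOf_length]; exact hj⟩, Fin.init x,
        mem_lslice.mpr ?_, ?_⟩
      · rw [Fin.snoc_init_self]; exact hx
      · show (Fin.snoc (Fin.init x) (x (Fin.last d)) : Fin (d+1) → ℕ) = x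
        rw [Fin.snoc_init_self]
  have hF : Function.Injective F := by
    intro a b hab
    exact Subtype.ext (by rw [← hGF a, ← hGF b, hab])
  have key : lowerCount (d + 1) n ≤ Nat.card S := Nat.card_le_card_of_injective F hF
  refine key.trans (le_of_eq ?_)
  show Nat.card (Σ c : Composition n, ∀ i : Fin c.length, T (c.blocksFun i)) = _
  rw [Nat.card_eq_fintype_card, Fintype.card_sigma]
  refine Finset.sum_congr rfl fun c _ => ?_
  rw [Fintype.card_pi]
  rw [← c.ofFn_blocksFun, List.map_ofFn, List.prod_ofFn]
  refine Finset.prod_congr rfl fun i _ => ?_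
  rw [← Nat.card_eq_fintype_card]
  rfl
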